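/- In the full variable gadget for y ∈ Y (all 10 nodes present), the maximum total number of gadget nodes coverable by vertex-disjoint directed cycles of length at most 3 inside the gadget is 8, attained by the consistent packings: either the 3-cycles {α_{y,i}, β_{y,f,i}, φ_{y,i}}, i=1,2, together with the 2-cycle {τ_{y,1}, τ_{y,2}}, or symmetrically the 3-cycles {α_{y,i}, β_{y,t,i}, τ_{y,i}}, i=1,2, together with the 2-cycle {φ_{y,1}, φ_{y,2}}. -/

import Mathlib

variable {V : Type*} [DecidableEq V]

/-- A directed (simple) cycle given as a list of distinct vertices. -/
def IsDicycle (A : V → V → Prop) (c : List V) : Prop :=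
  2 ≤ c.length ∧ c.Nodup ∧ c.Chain' A ∧
    ∀ h : c ≠ [], A (c.getLast h) (c.head h)

def cycVerts (c : List V) : Set V := {v | v ∈ c}

/-- A `K`-cycle packing inside the vertex set `W`. -/
def IsCyclePackingOn (A : V → V → Prop) (K : ℕ) (W : Set V) (P : Finset (List V)) : Prop :=
  (∀ c ∈ P, IsDicycle A c ∧ c.length ≤ K ∧ ∀ v ∈ c, v ∈ W) ∧
  (P : Set (List V)).Pairwise fun c d => ∀ v, v ∈ c → v ∉ d

def packSize (P : Finset (List V)) : ℕ := ∑ c ∈ P, c.length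

def pcovered (P : Finset (List V)) : Set V := {v | ∃ c ∈ P, v ∈ c}

/-- Maximum size of a `K`-cycle packing on `G[W]`. -/
noncomputable def wDir (A : V → V → Prop) (K : ℕ) (W : Set V) : ℕ :=
  sSup {n | ∃ P, IsCyclePackingOn A K W P ∧ packSize P = n}

/-- Minimum number of `L`-nodes covered over all maximum `K`-cycle packings on `G[W]`. -/
noncomputable def wLDir (A : V → V → Prop) (K : ℕ) (L W : Set V) : ℕ :=
  sInf {k | ∃ P, IsCyclePackingOn A K W P ∧ packSize P = wDir A K W ∧
    (pcovered P ∩ L).ncard = k}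

/-- The ten nodes of the variable gadget for `y ∈ Y`. -/
inductive YG : Type
  | tau1 | tau2 | phi1 | phi2 | al1 | al2 | bt1 | bt2 | bf1 | bf2
deriving DecidableEq

open YG in
instance : Fintype YG where
  elems := {tau1, tau2, phi1, phi2, al1, al2, bt1, bt2, bf1, bf2}
  complete := by intro x; cases x <;> simp

open YG in
/-- The arc set `A_y` of the `y`-gadget. -/
def yArc : YG → YG → Prop := fun u v =>
  (u, v) ∈ ({(al1, bt1), (bt1, tau1), (tau1, al1), (al2, bt2), (bt2, tau2), (tau2, al2),
             (al1, bf1), (bf1, phi1), (phi1, al1), (al2, bf2), (bf2, phi2), (phi2, al2),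
             (tau1, tau2), (tau2, tau1), (phi1, phi2), (phi2, phi1)} : Set (YG × YG))

/-- `P` contains a cycle whose vertex set is exactly `s`. -/
def hasCyc (P : Finset (List YG)) (s : Set YG) : Prop := ∃ c ∈ P, cycVerts c = s

open YG in
def yArcL : List (YG × YG) :=
  [(al1, bt1), (bt1, tau1), (tau1, al1), (al2, bt2), (bt2, tau2), (tau2, al2),
   (al1, bf1), (bf1, phi1), (phi1, al1), (al2, bf2), (bf2, phi2), (phi2, al2),
   (tau1, tau2), (tau2, tau1), (phi1, phi2), (phi2, phi1)]

lemma yArc_iff (u v : YG) : yArc u v ↔ (u, v) ∈ yArcL := by simp [yArc, yArcL]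

instance : DecidableRel yArc := fun u v => decidable_of_iff _ (yArc_iff u v).symm

open YG

/-- The six possible vertex sets of short dicycles in the gadget. -/
def SS : Finset (Finset YG) :=
  {{al1, bt1, tau1}, {al1, bf1, phi1}, {al2, bt2, tau2}, {al2, bf2, phi2},
   {tau1, tau2}, {phi1, phi2}}

lemma class2 : ∀ a b : YG, a ≠ b → yArc a b → yArc b a → ({a, b} : Finset YG) ∈ SS := by
  decide

lemma class3 : ∀ a b d : YG, a ≠ b → a ≠ d → b ≠ d → yArc a b → yArc b d → yArc d a →
    ({a, b, d} : Finset YG) ∈ SS := by decide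

set_option linter.unreachableTactic false in
set_option linter.unusedTactic false in
lemma keyP (p1 p2 p3 p4 p5 p6 : Prop) [Decidable p1] [Decidable p2] [Decidable p3]
    [Decidable p4] [Decidable p5] [Decidable p6] (n : ℕ)
    (hn : n = (if p1 then 3 else 0) + (if p2 then 3 else 0) + (if p3 then 3 else 0) +
      (if p4 then 3 else 0) + (if p5 then 2 else 0) + (if p6 then 2 else 0))
    (h12 : ¬(p1 ∧ p2)) (h34 : ¬(p3 ∧ p4)) (h15 : ¬(p1 ∧ p5)) (h35 : ¬(p3 ∧ p5))
    (h26 : ¬(p2 ∧ p6)) (h46 : ¬(p4 ∧ p6)) :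
    n ≤ 8 ∧ (n = 8 → (p2 ∧ p4 ∧ p5) ∨ (p1 ∧ p3 ∧ p6)) := by
  by_cases p1 <;> by_cases p2 <;> by_cases p3 <;> by_cases p4 <;> by_cases p5 <;>
    by_cases p6 <;> simp_all <;> omega

/-- Any short dicycle in the gadget has one of the six vertex sets. -/
lemma cyc_class (c : List YG) (hd : IsDicycle yArc c) (hK : c.length ≤ 3) :
    c.toFinset ∈ SS := by
  obtain ⟨hlen, hnd, hch, hlast⟩ := hd
  match c with
  | [] => simp at hlen
  | [a] => simp at hlen
  | [a, b] =>
    simp only [List.nodup_cons, List.mem_singleton, List.nodup_nil, and_true] at hnd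
    simp only [List.Chain', List.isChain_cons_cons] at hch
    have hba : yArc b a := by
      have := hlast (by simp)
      simpa using this
    have := class2 a b hnd.1 hch.1 hba
    simpa using this
  | [a, b, d] =>
    simp only [List.nodup_cons, List.mem_cons, List.mem_singleton, List.nodup_nil,
      and_true, not_or] at hnd
    simp only [List.Chain', List.isChain_cons_cons] at hch
    have hda : yArc d a := by
      have := hlast (by simp)
      simpa using this
    have := class3 a b d hnd.1.1 hnd.1.2.1 hnd.2.1.1 hch.1 hch.2.1 hda
    simpa using this
  | a :: b :: d :: e :: t => simp at hK; omega

/-- Key structural facts about any 3-cycle packing on the gadget. -/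
lemma pack_bound (P : Finset (List YG)) (hP : IsCyclePackingOn yArc 3 Set.univ P) :
    packSize P ≤ 8 ∧ (packSize P = 8 →
      ((∃ c ∈ P, c.toFinset = ({al1, bf1, phi1} : Finset YG)) ∧
       (∃ c ∈ P, c.toFinset = ({al2, bf2, phi2} : Finset YG)) ∧
       (∃ c ∈ P, c.toFinset = ({tau1, tau2} : Finset YG))) ∨
      ((∃ c ∈ P, c.toFinset = ({al1, bt1, tau1} : Finset YG)) ∧
       (∃ c ∈ P, c.toFinset = ({al2, bt2, tau2} : Finset YG)) ∧
       (∃ c ∈ P, c.toFinset = ({phi1, phi2} : Finset YG)))) := by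
  obtain ⟨h1, h2⟩ := hP
  set Q : Finset (Finset YG) := P.image List.toFinset with hQdef
  -- injectivity of toFinset on P
  have hinj : ∀ c ∈ P, ∀ d ∈ P, c.toFinset = d.toFinset → c = d := by
    intro c hc d hd he
    by_contra hne
    obtain ⟨⟨hlen, _, _, _⟩, _, _⟩ := h1 c hc
    have hcne : c ≠ [] := by intro h; rw [h] at hlen; simp at hlen
    have hm : c.head hcne ∈ c := List.head_mem hcne
    have hmd : c.head hcne ∈ d := by
      rw [← List.mem_toFinset, ← he, List.mem_toFinset]; exact hm
    exact h2 hc hd hne _ hm hmd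
  have hsum : packSize P = ∑ q ∈ Q, q.card := by
    rw [hQdef, Finset.sum_image hinj, packSize]
    refine Finset.sum_congr rfl fun c hc => ?_
    obtain ⟨⟨_, hnd, _, _⟩, _, _⟩ := h1 c hc
    exact (List.toFinset_card_of_nodup hnd).symm
  have hQsub : ∀ q ∈ Q, q ∈ SS := by
    intro q hq
    obtain ⟨c, hc, rfl⟩ := Finset.mem_image.mp hq
    obtain ⟨hdc, hK, _⟩ := h1 c hc
    exact cyc_class c hdc hK
  have hdisj : ∀ q ∈ Q, ∀ r ∈ Q, q ≠ r → q ∩ r = ∅ := by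
    intro q hq r hr hne
    obtain ⟨c, hc, rfl⟩ := Finset.mem_image.mp hq
    obtain ⟨d, hd, rfl⟩ := Finset.mem_image.mp hr
    have hcd : c ≠ d := fun h => hne (by rw [h])
    rw [Finset.eq_empty_iff_forall_notMem]
    intro v hv
    rw [Finset.mem_inter, List.mem_toFinset, List.mem_toFinset] at hv
    exact h2 hc hd hcd v hv.1 hv.2
  -- express the sum through indicators
  have hQfilter : Q = SS.filter (· ∈ Q) := by
    ext x
    simp only [Finset.mem_filter]
    exact ⟨fun h => ⟨hQsub x h, h⟩, fun h => h.2⟩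
  have hsum2 : packSize P =
      (if ({al1, bt1, tau1} : Finset YG) ∈ Q then 3 else 0) +
      (if ({al1, bf1, phi1} : Finset YG) ∈ Q then 3 else 0) +
      (if ({al2, bt2, tau2} : Finset YG) ∈ Q then 3 else 0) +
      (if ({al2, bf2, phi2} : Finset YG) ∈ Q then 3 else 0) +
      (if ({tau1, tau2} : Finset YG) ∈ Q then 2 else 0) +
      (if ({phi1, phi2} : Finset YG) ∈ Q then 2 else 0) := by
    rw [hsum]
    conv_lhs => rw [hQfilter]
    rw [Finset.sum_filter, SS]
    rw [Finset.sum_insert (by decide), Finset.sum_insert (by decide),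
      Finset.sum_insert (by decide), Finset.sum_insert (by decide),
      Finset.sum_insert (by decide), Finset.sum_singleton]
    simp only [show ({al1, bt1, tau1} : Finset YG).card = 3 from by decide,
      show ({al1, bf1, phi1} : Finset YG).card = 3 from by decide,
      show ({al2, bt2, tau2} : Finset YG).card = 3 from by decide,
      show ({al2, bf2, phi2} : Finset YG).card = 3 from by decide,
      show ({tau1, tau2} : Finset YG).card = 2 from by decide,
      show ({phi1, phi2} : Finset YG).card = 2 from by decide]
    ring
  have hne12 : ¬(({al1, bt1, tau1} : Finset YG) ∈ Q ∧ ({al1, bf1, phi1} : Finset YG) ∈ Q) := by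
    rintro ⟨ha, hb⟩
    exact absurd (hdisj _ ha _ hb (by decide)) (by decide)
  have hne34 : ¬(({al2, bt2, tau2} : Finset YG) ∈ Q ∧ ({al2, bf2, phi2} : Finset YG) ∈ Q) := by
    rintro ⟨ha, hb⟩
    exact absurd (hdisj _ ha _ hb (by decide)) (by decide)
  have hne15 : ¬(({al1, bt1, tau1} : Finset YG) ∈ Q ∧ ({tau1, tau2} : Finset YG) ∈ Q) := by
    rintro ⟨ha, hb⟩
    exact absurd (hdisj _ ha _ hb (by decide)) (by decide)
  have hne35 : ¬(({al2, bt2, tau2} : Finset YG) ∈ Q ∧ ({tau1, tau2} : Finset YG) ∈ Q) := by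
    rintro ⟨ha, hb⟩
    exact absurd (hdisj _ ha _ hb (by decide)) (by decide)
  have hne26 : ¬(({al1, bf1, phi1} : Finset YG) ∈ Q ∧ ({phi1, phi2} : Finset YG) ∈ Q) := by
    rintro ⟨ha, hb⟩
    exact absurd (hdisj _ ha _ hb (by decide)) (by decide)
  have hne46 : ¬(({al2, bf2, phi2} : Finset YG) ∈ Q ∧ ({phi1, phi2} : Finset YG) ∈ Q) := by
    rintro ⟨ha, hb⟩
    exact absurd (hdisj _ ha _ hb (by decide)) (by decide)
  obtain ⟨hle, heq⟩ := keyP _ _ _ _ _ _ (packSize P) hsum2 hne12 hne34 hne15 hne35 hne26 hne46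
  refine ⟨hle, fun h8 => ?_⟩
  have toEx : ∀ s : Finset YG, s ∈ Q → ∃ c ∈ P, c.toFinset = s := by
    intro s hs
    obtain ⟨c, hc, rfl⟩ := Finset.mem_image.mp hs
    exact ⟨c, hc, rfl⟩
  rcases heq h8 with ⟨ha, hb, hcq⟩ | ⟨ha, hb, hcq⟩
  · exact Or.inl ⟨toEx _ ha, toEx _ hb, toEx _ hcq⟩
  · exact Or.inr ⟨toEx _ ha, toEx _ hb, toEx _ hcq⟩

def P₀ : Finset (List YG) := {[al1, bf1, phi1], [al2, bf2, phi2], [tau1, tau2]}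

lemma P₀_packing : IsCyclePackingOn yArc 3 Set.univ P₀ := by
  constructor
  · intro c hc
    fin_cases hc
    · exact ⟨⟨by decide, by decide,
        List.isChain_cons_cons.mpr ⟨by decide, List.isChain_pair.mpr (by decide)⟩,
        fun _ => show yArc phi1 al1 by decide⟩, by decide, fun v _ => Set.mem_univ v⟩
    · exact ⟨⟨by decide, by decide,
        List.isChain_cons_cons.mpr ⟨by decide, List.isChain_pair.mpr (by decide)⟩,
        fun _ => show yArc phi2 al2 by decide⟩, by decide, fun v _ => Set.mem_univ v⟩
    · exact ⟨⟨by decide, by decide,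
        List.isChain_pair.mpr (by decide),
        fun _ => show yArc tau2 tau1 by decide⟩, by decide, fun v _ => Set.mem_univ v⟩
  · have dec : ∀ c ∈ P₀, ∀ d ∈ P₀, c ≠ d → ∀ v, v ∈ c → v ∉ d := by decide
    exact fun c hc d hd hne => dec c hc d hd hne

lemma P₀_size : packSize P₀ = 8 := by decide

lemma coe_toFinset_eq (c : List YG) : cycVerts c = ↑c.toFinset := by
  ext v; simp [cycVerts]

open YG in
/-- in the full `y`-gadget the maximum 3-cycle packing covers 8 nodes,
attained exactly by the two consistent packings. -/
theorem stmt8 :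
    wDir yArc 3 (Set.univ : Set YG) = 8 ∧
    (∀ P, IsCyclePackingOn yArc 3 Set.univ P → packSize P = 8 →
      (hasCyc P {al1, bf1, phi1} ∧ hasCyc P {al2, bf2, phi2} ∧ hasCyc P {tau1, tau2}) ∨
      (hasCyc P {al1, bt1, tau1} ∧ hasCyc P {al2, bt2, tau2} ∧ hasCyc P {phi1, phi2})) := by
  have huniq : ∀ P, IsCyclePackingOn yArc 3 Set.univ P → packSize P = 8 →
      (hasCyc P {al1, bf1, phi1} ∧ hasCyc P {al2, bf2, phi2} ∧ hasCyc P {tau1, tau2}) ∨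
      (hasCyc P {al1, bt1, tau1} ∧ hasCyc P {al2, bt2, tau2} ∧ hasCyc P {phi1, phi2}) := by
    intro P hP h8
    have key := (pack_bound P hP).2 h8
    have conv : ∀ (s : Finset YG) (t : Set YG), ↑s = t →
        (∃ c ∈ P, c.toFinset = s) → hasCyc P t := by
      rintro s t rfl ⟨c, hc, hcs⟩
      exact ⟨c, hc, by rw [coe_toFinset_eq, hcs]⟩
    rcases key with ⟨ha, hb, hc⟩ | ⟨ha, hb, hc⟩
    · exact Or.inl ⟨conv _ _ (by simp) ha, conv _ _ (by simp) hb, conv _ _ (by simp) hc⟩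
    · exact Or.inr ⟨conv _ _ (by simp) ha, conv _ _ (by simp) hb, conv _ _ (by simp) hc⟩
  refine ⟨?_, huniq⟩
  have h8mem : 8 ∈ {n | ∃ P, IsCyclePackingOn yArc 3 (Set.univ : Set YG) P ∧ packSize P = n} :=
    ⟨P₀, P₀_packing, P₀_size⟩
  have hub : ∀ n ∈ {n | ∃ P, IsCyclePackingOn yArc 3 (Set.univ : Set YG) P ∧ packSize P = n},
      n ≤ 8 := by
    rintro n ⟨P, hP, rfl⟩
    exact (pack_bound P hP).1
  exact le_antisymm (csSup_le ⟨8, h8mem⟩ hub) (le_csSup ⟨8, hub⟩ h8mem)
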